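/- Bol's identity: for an integer k ≥ 2, any γ ∈ SL₂(ℝ), and any smooth (holomorphic) function f on the upper half-plane, D^{k-1}(f |_{2-k} γ) = (D^{k-1} f) |_k γ, where |_k denotes the weight-k slash action (f|_kγ)(z) = (cz+d)^{-k} f(γz) and D^{k-1} = (2πi)^{1-k} d^{k-1}/dz^{k-1}. -/

import Mathlib

set_option autoImplicit false

open Complex Real Finset

namespace BolAux

noncomputable def A (n : ℕ) : ℕ → ℕ → ℂ
  | 0, 0 => 1
  | 0, _+1 => 0
  | j+1, 0 => ((n:ℂ) - 1 - j) * A n j 0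
  | j+1, i+1 => A n j i + ((n:ℂ) - 2 - j - i) * A n j (i+1)

lemma A_zero_of_lt (n : ℕ) : ∀ j i, j < i → A n j i = 0 := by
  intro j
  induction j with
  | zero =>
    intro i hi
    match i, hi with
    | i+1, _ => rfl
  | succ j ih =>
    intro i hi
    match i, hi with
    | i+1, hi =>
      have h1 : j < i := by omega
      show A n j i + ((n:ℂ) - 2 - j - i) * A n j (i+1) = 0
      rw [ih i h1, ih (i+1) (by omega)]
      ring

lemma A_eq (n : ℕ) : ∀ j i, i ≤ j →
    A n j i = (j.choose i : ℂ) * ∏ t ∈ range (j - i), ((n:ℂ) - 1 - i - t) := by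
  intro j
  induction j with
  | zero =>
    intro i hi
    interval_cases i
    simp [A]
  | succ j ih =>
    intro i hi
    match i with
    | 0 =>
      show ((n:ℂ) - 1 - j) * A n j 0 = _
      rw [ih 0 (Nat.zero_le _)]
      simp only [Nat.choose_zero_right, Nat.cast_one, one_mul, Nat.sub_zero]
      rw [Finset.prod_range_succ]
      push_cast
      ring
    | i+1 =>
      have hij : i ≤ j := by omega
      show A n j i + ((n:ℂ) - 2 - j - i) * A n j (i+1) = _
      rcases eq_or_lt_of_le hij with h | h
      · subst h
        rw [A_zero_of_lt n i (i+1) (by omega), ih i le_rfl]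
        simp
      · -- i < j
        have h1 : i + 1 ≤ j := h
        rw [ih i hij, ih (i+1) h1]
        have hm : j - i = (j - i - 1) + 1 := by omega
        have hm2 : j + 1 - (i + 1) = (j - i - 1) + 1 := by omega
        set m := j - i - 1 with hmdef
        have hprod : ∀ t : ℕ, ((n:ℂ) - 1 - i - (↑(t + 1):ℂ)) = ((n:ℂ) - 1 - (↑(i+1):ℂ) - t) := by
          intro t; push_cast; ring
        have hmc : (m:ℂ) = (j:ℂ) - i - 1 := by
          rw [hmdef]
          rw [show j - i - 1 = j - (i+1) from by omega, Nat.cast_sub (by omega : i + 1 ≤ j)]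
          push_cast; ring
        have e1 : ∏ t ∈ range (j - i), ((n:ℂ)-1-i-t)
            = (∏ t ∈ range m, ((n:ℂ)-1-(↑(i+1):ℂ)-t)) * ((n:ℂ)-1-i) := by
          rw [hm, Finset.prod_range_succ']
          congr 1
          · exact Finset.prod_congr rfl fun t _ => hprod t
          · push_cast; ring
        have e2 : j - (i+1) = m := by omega
        have e3 : ∏ t ∈ range (j+1-(i+1)), ((n:ℂ)-1-(↑(i+1):ℂ)-t)
            = (∏ t ∈ range m, ((n:ℂ)-1-(↑(i+1):ℂ)-t)) * ((n:ℂ)-1-j) := by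
          rw [hm2, Finset.prod_range_succ]
          congr 1
          rw [hmc]; push_cast; ring
        rw [e1, e2, e3]
        set P := ∏ t ∈ range m, ((n:ℂ) - 1 - (↑(i+1):ℂ) - t) with hP
        have hc : ((j.choose (i+1) : ℂ)) * ((i:ℂ)+1) = (j.choose i : ℂ) * ((j:ℂ) - i) := by
          have h2 : ((j.choose (i + 1) * (i + 1) : ℕ) : ℂ) = ((j.choose i * (j - i) : ℕ) : ℂ) := by
            exact congrArg (fun x : ℕ => (x : ℂ)) (Nat.choose_succ_right_eq j i)
          push_cast [Nat.cast_sub hij] at h2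
          exact_mod_cast h2
        have hcs : (((j+1).choose (i+1)) : ℂ) = (j.choose i : ℂ) + (j.choose (i+1) : ℂ) := by
          rw [Nat.choose_succ_succ]; push_cast; ring
        rw [hcs]
        push_cast
        linear_combination (-P) * hc

lemma A_diag (n : ℕ) : ∀ j, A n j j = 1 := by
  intro j
  induction j with
  | zero => rfl
  | succ j ih =>
    show A n j j + ((n:ℂ) - 2 - j - j) * A n j (j+1) = 1
    rw [ih, A_zero_of_lt n j (j+1) (by omega)]
    ring

lemma A_top_zero (n : ℕ) (i : ℕ) (hi : i < n) : A n n i = 0 := by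
  rw [A_eq n n i hi.le]
  have hmem : n - 1 - i ∈ range (n - i) := by
    rw [Finset.mem_range]; omega
  rw [Finset.prod_eq_zero hmem]
  · ring
  · rw [show n - 1 - i = n - (1 + i) from by omega, Nat.cast_sub (by omega : 1 + i ≤ n)]
    push_cast; ring

end BolAux

namespace BolAux

lemma sum_step (n j : ℕ) (cc pp : ℂ) (hpp : pp ≠ 0) (G : ℕ → ℂ) :
    (∑ i ∈ range (j + 1), A n j i * cc ^ (j - i) *
        (((n : ℂ) - 1 - j - i) * pp ^ ((n : ℤ) - 1 - j - i - 1) * cc * G i +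
          pp ^ ((n : ℤ) - 1 - j - i) * (G (i + 1) * pp ^ (-2 : ℤ))))
      = ∑ i ∈ range (j + 2), A n (j + 1) i * cc ^ (j + 1 - i) *
          pp ^ ((n : ℤ) - 1 - (j + 1 : ℕ) - i) * G i := by
  have hL : ∀ i ∈ range (j + 1),
      A n j i * cc ^ (j - i) *
        (((n : ℂ) - 1 - j - i) * pp ^ ((n : ℤ) - 1 - j - i - 1) * cc * G i +
          pp ^ ((n : ℤ) - 1 - j - i) * (G (i + 1) * pp ^ (-2 : ℤ)))
      = (((n : ℂ) - 1 - j - i) * A n j i * (cc ^ (j - i) * cc) * pp ^ ((n : ℤ) - 2 - j - i)) * G i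
        + (A n j i * cc ^ (j - i) * pp ^ ((n : ℤ) - 3 - j - i)) * G (i + 1) := by
    intro i _
    have e1 : pp ^ ((n : ℤ) - 1 - j - i - 1) = pp ^ ((n : ℤ) - 2 - j - i) := by congr 1; ring
    have e2 : pp ^ ((n : ℤ) - 1 - j - i) * pp ^ (-2 : ℤ) = pp ^ ((n : ℤ) - 3 - j - i) := by
      rw [← zpow_add₀ hpp]; congr 1; ring
    rw [e1, ← e2]; ring
  rw [Finset.sum_congr rfl hL, Finset.sum_add_distrib]
  conv_rhs => rw [Finset.sum_range_succ']
  have hR : ∀ i ∈ range (j + 1),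
      A n (j + 1) (i + 1) * cc ^ (j + 1 - (i + 1)) *
          pp ^ ((n : ℤ) - 1 - (↑(j + 1) : ℤ) - (↑(i + 1) : ℤ)) * G (i + 1)
      = (A n j i * cc ^ (j - i) * pp ^ ((n : ℤ) - 3 - j - i)) * G (i + 1)
        + (((n : ℂ) - 2 - j - i) * A n j (i + 1) * cc ^ (j - i) * pp ^ ((n : ℤ) - 3 - j - i))
            * G (i + 1) := by
    intro i _
    have hA : A n (j + 1) (i + 1) = A n j i + ((n : ℂ) - 2 - j - i) * A n j (i + 1) := rfl
    have e3 : pp ^ ((n : ℤ) - 1 - (↑(j + 1) : ℤ) - (↑(i + 1) : ℤ)) = pp ^ ((n : ℤ) - 3 - j - i) := by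
      congr 1; push_cast; ring
    rw [hA, e3, show j + 1 - (i + 1) = j - i from by omega]
    ring
  rw [Finset.sum_congr rfl hR, Finset.sum_add_distrib]
  have hBsum : ∑ i ∈ range (j + 1),
      (((n : ℂ) - 1 - j - i) * A n j i * (cc ^ (j - i) * cc) * pp ^ ((n : ℤ) - 2 - j - i)) * G i
      = (∑ i ∈ range j,
          (((n : ℂ) - 2 - j - i) * A n j (i + 1) * cc ^ (j - i) * pp ^ ((n : ℤ) - 3 - j - i))
            * G (i + 1))
        + (((n : ℂ) - 1 - j) * A n j 0 * (cc ^ j * cc) * pp ^ ((n : ℤ) - 2 - j)) * G 0 := by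
    rw [Finset.sum_range_succ']
    congr 1
    · refine Finset.sum_congr rfl fun i hi => ?_
      have hij : i < j := Finset.mem_range.1 hi
      have e4 : pp ^ ((n : ℤ) - 2 - j - (↑(i + 1) : ℤ)) = pp ^ ((n : ℤ) - 3 - j - i) := by
        congr 1; push_cast; ring
      have e5 : cc ^ (j - (i + 1)) * cc = cc ^ (j - i) := by
        rw [show j - i = (j - (i + 1)) + 1 from by omega, pow_succ]
      have e6 : ((n : ℂ) - 1 - j - (↑(i + 1) : ℂ)) = (n : ℂ) - 2 - j - i := by
        push_cast; ring
      rw [e4, e5, e6]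
    · norm_num
  rw [hBsum]
  have hDsum : ∑ i ∈ range (j + 1),
      (((n : ℂ) - 2 - j - i) * A n j (i + 1) * cc ^ (j - i) * pp ^ ((n : ℤ) - 3 - j - i))
        * G (i + 1)
      = (∑ i ∈ range j,
          (((n : ℂ) - 2 - j - i) * A n j (i + 1) * cc ^ (j - i) * pp ^ ((n : ℤ) - 3 - j - i))
            * G (i + 1)) := by
    rw [Finset.sum_range_succ, A_zero_of_lt n j (j + 1) (by omega)]
    ring
  rw [hDsum]
  have hR0 : A n (j + 1) 0 * cc ^ (j + 1 - 0) * pp ^ ((n : ℤ) - 1 - (↑(j + 1) : ℤ) - (↑(0:ℕ) : ℤ))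
      * G 0
      = (((n : ℂ) - 1 - j) * A n j 0 * (cc ^ j * cc) * pp ^ ((n : ℤ) - 2 - j)) * G 0 := by
    have hA0 : A n (j + 1) 0 = ((n : ℂ) - 1 - j) * A n j 0 := rfl
    have e7 : pp ^ ((n : ℤ) - 1 - (↑(j + 1) : ℤ) - (↑(0:ℕ) : ℤ)) = pp ^ ((n : ℤ) - 2 - j) := by
      congr 1; push_cast; ring
    rw [hA0, e7, show j + 1 - 0 = j + 1 from rfl, pow_succ]
  rw [hR0]
  ring

end BolAux

namespace BolAux

lemma denom_ne {a b c d : ℝ} (hdet : a * d - b * c = 1) {z : ℂ} (hz : 0 < z.im) :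
    (c : ℂ) * z + d ≠ 0 := by
  intro h0
  have him : c * z.im = 0 := by
    have h1 := congrArg Complex.im h0
    simpa using h1
  have hc : c = 0 := by
    rcases mul_eq_zero.1 him with h | h
    · exact h
    · exact absurd h (ne_of_gt hz)
  have hre : c * z.re + d = 0 := by
    have h1 := congrArg Complex.re h0
    simpa using h1
  rw [hc, zero_mul, zero_add] at hre
  rw [hc, hre] at hdet
  norm_num at hdet

lemma mem_H {a b c d : ℝ} (hdet : a * d - b * c = 1) {z : ℂ} (hz : 0 < z.im) :
    0 < (((a : ℂ) * z + b) / ((c : ℂ) * z + d)).im := by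
  have hne := denom_ne hdet hz
  have hnsq : 0 < Complex.normSq ((c : ℂ) * z + d) := Complex.normSq_pos.2 hne
  have him : (((a : ℂ) * z + b) / ((c : ℂ) * z + d)).im
      = z.im / Complex.normSq ((c : ℂ) * z + d) := by
    rw [Complex.div_im]
    simp only [Complex.add_im, Complex.add_re, Complex.mul_im, Complex.mul_re,
      Complex.ofReal_re, Complex.ofReal_im, zero_mul, mul_zero, sub_zero, zero_add, add_zero]
    rw [div_sub_div_same]
    congr 1
    linear_combination z.im * hdet
  rw [him]
  exact div_pos hz hnsq

lemma main (n : ℕ) (a b c d : ℝ) (hdet : a * d - b * c = 1) (f : ℂ → ℂ)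
    (hf : DifferentiableOn ℂ f {w : ℂ | 0 < w.im}) (j : ℕ) :
    ∀ z ∈ {w : ℂ | 0 < w.im},
      iteratedDeriv j (fun w => ((c : ℂ) * w + d) ^ ((n : ℤ) - 1) *
          f (((a : ℂ) * w + b) / ((c : ℂ) * w + d))) z
        = ∑ i ∈ range (j + 1), A n j i * (c : ℂ) ^ (j - i) *
            ((c : ℂ) * z + d) ^ ((n : ℤ) - 1 - j - i) *
            iteratedDeriv i f (((a : ℂ) * z + b) / ((c : ℂ) * z + d)) := by
  have hH : IsOpen {w : ℂ | 0 < w.im} := isOpen_lt continuous_const Complex.continuous_im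
  have hA : AnalyticOnNhd ℂ f {w : ℂ | 0 < w.im} := hf.analyticOnNhd hH
  have hAn : ∀ i, AnalyticOnNhd ℂ (iteratedDeriv i f) {w : ℂ | 0 < w.im} := by
    intro i
    induction i with
    | zero => simpa [iteratedDeriv_zero] using hA
    | succ i ih => rw [iteratedDeriv_succ]; exact ih.deriv
  induction j with
  | zero =>
    intro z hz
    rw [iteratedDeriv_zero, Finset.sum_range_one]
    norm_num [A]
  | succ j ih =>
    intro z hz
    have hpz : (c : ℂ) * z + d ≠ 0 := denom_ne hdet hz
    have hUmem : (((a : ℂ) * z + b) / ((c : ℂ) * z + d)) ∈ {w : ℂ | 0 < w.im} :=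
      mem_H hdet hz
    rw [iteratedDeriv_succ]
    have hev : (iteratedDeriv j (fun w => ((c : ℂ) * w + d) ^ ((n : ℤ) - 1) *
          f (((a : ℂ) * w + b) / ((c : ℂ) * w + d))))
        =ᶠ[nhds z] (fun w => ∑ i ∈ range (j + 1), A n j i * (c : ℂ) ^ (j - i) *
            ((c : ℂ) * w + d) ^ ((n : ℤ) - 1 - j - i) *
            iteratedDeriv i f (((a : ℂ) * w + b) / ((c : ℂ) * w + d))) :=
      Filter.eventuallyEq_of_mem (hH.mem_nhds hz) (fun w hw => ih w hw)
    rw [hev.deriv_eq]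
    have hlin : HasDerivAt (fun w : ℂ => (c : ℂ) * w + d) (c : ℂ) z := by
      simpa using ((hasDerivAt_id z).const_mul (c : ℂ)).add_const (d : ℂ)
    have hu : HasDerivAt (fun w : ℂ => ((a : ℂ) * w + b) / ((c : ℂ) * w + d))
        (((c : ℂ) * z + d) ^ (-2 : ℤ)) z := by
      have hna : HasDerivAt (fun w : ℂ => (a : ℂ) * w + b) (a : ℂ) z := by
        simpa using ((hasDerivAt_id z).const_mul (a : ℂ)).add_const (b : ℂ)
      have hdiv := hna.div hlin hpz
      refine HasDerivAt.congr_deriv hdiv ?_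
      have h1 : ((a * d - b * c : ℝ) : ℂ) = 1 := by rw [hdet]; norm_num
      push_cast at h1
      have hnum : (a : ℂ) * ((c : ℂ) * z + d) - ((a : ℂ) * z + b) * c = 1 := by
        linear_combination h1
      rw [hnum]
      rw [zpow_neg, one_div]
      norm_cast
    have hsum : HasDerivAt (fun w => ∑ i ∈ range (j + 1), A n j i * (c : ℂ) ^ (j - i) *
          ((c : ℂ) * w + d) ^ ((n : ℤ) - 1 - j - i) *
          iteratedDeriv i f (((a : ℂ) * w + b) / ((c : ℂ) * w + d)))
        (∑ i ∈ range (j + 1), A n j i * (c : ℂ) ^ (j - i) *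
          (((n : ℂ) - 1 - j - i) * ((c : ℂ) * z + d) ^ ((n : ℤ) - 1 - j - i - 1) * c *
              iteratedDeriv i f (((a : ℂ) * z + b) / ((c : ℂ) * z + d)) +
            ((c : ℂ) * z + d) ^ ((n : ℤ) - 1 - j - i) *
              (iteratedDeriv (i + 1) f (((a : ℂ) * z + b) / ((c : ℂ) * z + d)) *
                ((c : ℂ) * z + d) ^ (-2 : ℤ)))) z := by
      apply HasDerivAt.fun_sum
      intro i _
      have hgi : HasDerivAt (iteratedDeriv i f)
          (iteratedDeriv (i + 1) f (((a : ℂ) * z + b) / ((c : ℂ) * z + d)))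
          (((a : ℂ) * z + b) / ((c : ℂ) * z + d)) := by
        have h2 := ((hAn i) _ hUmem).differentiableAt.hasDerivAt
        rw [iteratedDeriv_succ]
        exact h2
      have hcomp : HasDerivAt
          (fun w => iteratedDeriv i f (((a : ℂ) * w + b) / ((c : ℂ) * w + d)))
          (iteratedDeriv (i + 1) f (((a : ℂ) * z + b) / ((c : ℂ) * z + d)) *
            ((c : ℂ) * z + d) ^ (-2 : ℤ)) z := by exact hgi.comp z hu
      have hpow : HasDerivAt (fun w : ℂ => ((c : ℂ) * w + d) ^ ((n : ℤ) - 1 - j - i))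
          (((((n : ℤ) - 1 - j - i) : ℤ) : ℂ) *
            ((c : ℂ) * z + d) ^ ((n : ℤ) - 1 - j - i - 1) * c) z := by
        have h2 := (hasDerivAt_zpow ((n : ℤ) - 1 - j - i) ((c : ℂ) * z + d)
          (Or.inl hpz)).comp z hlin
        refine HasDerivAt.congr_deriv h2 ?_
        ring
      have h3 := (hpow.fun_mul hcomp).const_mul (A n j i * (c : ℂ) ^ (j - i))
      simp only [← mul_assoc] at h3 ⊢
      refine HasDerivAt.congr_deriv h3 ?_
      push_cast
      ring
    rw [hsum.deriv]
    exact sum_step n j (c : ℂ) ((c : ℂ) * z + d) hpz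
      (fun i => iteratedDeriv i f (((a : ℂ) * z + b) / ((c : ℂ) * z + d)))

end BolAux

/-- Bol's identity `D^{k-1}(f|_{2-k}γ) = (D^{k-1}f)|_k γ` for
`γ = (a b; c d) ∈ SL₂(ℝ)` and `f` holomorphic on the upper half-plane.
Here `(f|_{2-k}γ)(z) = (cz+d)^{k-2} f(γz)` and
`(g|_k γ)(z) = (cz+d)^{-k} g(γz)`. -/
theorem bol_identity (k : ℕ) (hk : 2 ≤ k) (a b c d : ℝ)
    (hdet : a * d - b * c = 1) (f : ℂ → ℂ)
    (hf : DifferentiableOn ℂ f {w : ℂ | 0 < w.im}) :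
    ∀ z : ℂ, 0 < z.im →
      (2 * π * I) ^ ((1 : ℤ) - k) *
        iteratedDerivWithin (k - 1)
          (fun w : ℂ => ((c : ℂ) * w + d) ^ (k - 2) *
            f (((a : ℂ) * w + b) / ((c : ℂ) * w + d)))
          {w : ℂ | 0 < w.im} z
      = ((c : ℂ) * z + d) ^ (-(k : ℤ)) *
          ((2 * π * I) ^ ((1 : ℤ) - k) *
            iteratedDerivWithin (k - 1) f {w : ℂ | 0 < w.im}
              (((a : ℂ) * z + b) / ((c : ℂ) * z + d))) := by
  intro z hz
  have hH : IsOpen {w : ℂ | 0 < w.im} := isOpen_lt continuous_const Complex.continuous_im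
  have hz' : z ∈ {w : ℂ | 0 < w.im} := hz
  have hU : (((a : ℂ) * z + b) / ((c : ℂ) * z + d)) ∈ {w : ℂ | 0 < w.im} :=
    BolAux.mem_H hdet hz
  have hiter : ∀ (g : ℂ → ℂ) (m : ℕ) (x : ℂ), x ∈ {w : ℂ | 0 < w.im} →
      iteratedDerivWithin m g {w : ℂ | 0 < w.im} x = iteratedDeriv m g x := by
    intro g m x hx
    rw [iteratedDerivWithin_eq_iteratedFDerivWithin, iteratedDeriv_eq_iteratedFDeriv,
      iteratedFDerivWithin_of_isOpen m hH hx]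
  rw [hiter _ _ _ hz', hiter _ _ _ hU]
  set n := k - 1 with hn
  have hfun : (fun w : ℂ => ((c : ℂ) * w + d) ^ (k - 2) *
        f (((a : ℂ) * w + b) / ((c : ℂ) * w + d)))
      = (fun w : ℂ => ((c : ℂ) * w + d) ^ ((n : ℤ) - 1) *
        f (((a : ℂ) * w + b) / ((c : ℂ) * w + d))) := by
    funext w
    congr 1
    rw [show (n : ℤ) - 1 = ((k - 2 : ℕ) : ℤ) from by rw [hn]; push_cast; omega, zpow_natCast]
  rw [hfun]
  rw [BolAux.main n a b c d hdet f hf n z hz']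
  have hpz : (c : ℂ) * z + d ≠ 0 := BolAux.denom_ne hdet hz
  have hsum : ∑ i ∈ Finset.range (n + 1), BolAux.A n n i * (c : ℂ) ^ (n - i) *
        ((c : ℂ) * z + d) ^ ((n : ℤ) - 1 - n - i) *
        iteratedDeriv i f (((a : ℂ) * z + b) / ((c : ℂ) * z + d))
      = ((c : ℂ) * z + d) ^ (-(k : ℤ)) *
        iteratedDeriv n f (((a : ℂ) * z + b) / ((c : ℂ) * z + d)) := by
    rw [Finset.sum_range_succ]
    have hzero : ∑ i ∈ Finset.range n, BolAux.A n n i * (c : ℂ) ^ (n - i) *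
        ((c : ℂ) * z + d) ^ ((n : ℤ) - 1 - n - i) *
        iteratedDeriv i f (((a : ℂ) * z + b) / ((c : ℂ) * z + d)) = 0 :=
      Finset.sum_eq_zero fun i hi => by
        rw [BolAux.A_top_zero n i (Finset.mem_range.1 hi)]; ring
    rw [hzero, BolAux.A_diag, zero_add, Nat.sub_self, pow_zero]
    have he : (n : ℤ) - 1 - n - n = -(k : ℤ) := by
      rw [hn]; push_cast; omega
    rw [he]
    ring
  rw [hsum]
  ring
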